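/- arXiv:1512.06897 — 3 statements merged into one kernel-verified Lean document; each statement's English description precedes it below -/
import Mathlib

section
/- Fix a real number q ≥ 1 and abstract branch data satisfying the genus-growth condition. Then ‖Σ‖^q ≥ Σ_{i=1}^{g₁} 1/(2q)^{n(i)}. In particular ‖Σ‖^q ≥ 0. -/
open Finset

lemma geom_half_sum (n : ℕ) :
    ∑ k ∈ Finset.Icc 2 (n + 1), (1 : ℝ) / 2 ^ (k - 1) = 1 - 1 / 2 ^ n := by
  induction n with
  | zero => simp
  | succ n ih =>
      rw [Finset.sum_Icc_succ_top (by omega : 2 ≤ n + 1 + 1), ih]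
      have : n + 1 + 1 - 1 = n + 1 := by omega
      rw [this]
      field_simp
      ring

/-- Each branch of length `len i` contributes at least `1/(2q)^(len i)` to the grope
length `‖Σ‖^q = ∑_{i=1}^{g₁} q^{-len i} (1 - ∑_{k=2}^{len i + 1} 1/g(i,k))`, assuming
the genus-growth condition `g(i,k) ≥ 2^(k-1)`.  In particular the grope length is
nonnegative. -/
theorem grope_length_lower_bound (q : ℝ) (hq : 1 ≤ q)
    (g₁ : ℕ) (len : ℕ → ℕ) (g : ℕ → ℕ → ℝ)
    (hgrowth : ∀ i ∈ Finset.Icc 1 g₁, ∀ k, 2 ≤ k → k ≤ len i + 1 →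
      (2 : ℝ) ^ (k - 1) ≤ g i k) :
    (∑ i ∈ Finset.Icc 1 g₁, 1 / (2 * q) ^ len i ≤
      ∑ i ∈ Finset.Icc 1 g₁,
        (1 / q ^ len i) * (1 - ∑ k ∈ Finset.Icc 2 (len i + 1), 1 / g i k)) ∧
    0 ≤ ∑ i ∈ Finset.Icc 1 g₁,
        (1 / q ^ len i) * (1 - ∑ k ∈ Finset.Icc 2 (len i + 1), 1 / g i k) := by
  have hq0 : (0 : ℝ) < q := lt_of_lt_of_le one_pos hq
  have hmain : ∑ i ∈ Finset.Icc 1 g₁, 1 / (2 * q) ^ len i ≤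
      ∑ i ∈ Finset.Icc 1 g₁,
        (1 / q ^ len i) * (1 - ∑ k ∈ Finset.Icc 2 (len i + 1), 1 / g i k) := by
    apply Finset.sum_le_sum
    intro i hi
    have hS : ∑ k ∈ Finset.Icc 2 (len i + 1), 1 / g i k ≤
        ∑ k ∈ Finset.Icc 2 (len i + 1), (1 : ℝ) / 2 ^ (k - 1) := by
      apply Finset.sum_le_sum
      intro k hk
      rw [Finset.mem_Icc] at hk
      have hg := hgrowth i hi k hk.1 hk.2
      have hpos : (0 : ℝ) < 2 ^ (k - 1) := by positivity
      exact one_div_le_one_div_of_le hpos hg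
    rw [geom_half_sum] at hS
    have h1 : (1 : ℝ) / 2 ^ len i ≤ 1 - ∑ k ∈ Finset.Icc 2 (len i + 1), 1 / g i k := by
      linarith
    have hqpow : (0 : ℝ) < q ^ len i := by positivity
    calc (1 : ℝ) / (2 * q) ^ len i = (1 / q ^ len i) * (1 / 2 ^ len i) := by
          rw [mul_pow]; field_simp
      _ ≤ (1 / q ^ len i) * (1 - ∑ k ∈ Finset.Icc 2 (len i + 1), 1 / g i k) := by
          apply mul_le_mul_of_nonneg_left h1 (by positivity)
  refine ⟨hmain, le_trans ?_ hmain⟩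
  apply Finset.sum_nonneg
  intro i _
  positivity
end

section
/- Fix a real number q ≥ 1, an integer n ≥ 2, and abstract branch data satisfying the genus-growth condition. If some branch i₀ has length n(i₀) ≤ n−2, then ‖Σ‖^q ≥ 1/(2q)^{n−2} = 1/(q^{n−2}·2^{n−2}). -/
open Finset

lemma geo_sum_half (m : ℕ) :
    ∑ k ∈ Finset.Icc 2 (m + 1), ((1:ℝ)/2) ^ (k - 1) = 1 - (1/2) ^ m := by
  induction m with
  | zero => simp
  | succ m ih =>
      rw [show m + 1 + 1 = (m + 1) + 1 from rfl,
        Finset.sum_Icc_succ_top (by omega : 2 ≤ m + 1 + 1), ih]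
      have : (m + 1 + 1 - 1) = m + 1 := by omega
      rw [this]
      ring

/-- Proposition 2.8 of the paper, quantitative form: fix `q ≥ 1` and `n ≥ 2`, and
abstract branch data satisfying the genus-growth condition.  If some branch `i₀` has
length `len i₀ ≤ n - 2`, then the grope length
`‖Σ‖^q = ∑_{i=1}^{g₁} q^{-len i} (1 - ∑_{k=2}^{len i + 1} 1/g(i,k))` satisfies
`‖Σ‖^q ≥ 1/(2q)^(n-2) = 1/(q^(n-2) · 2^(n-2))`. -/
theorem grope_length_short_branch_bound (q : ℝ) (hq : 1 ≤ q) (n : ℕ) (hn : 2 ≤ n)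
    (g₁ : ℕ) (len : ℕ → ℕ) (g : ℕ → ℕ → ℝ)
    (hgrowth : ∀ i ∈ Finset.Icc 1 g₁, ∀ k, 2 ≤ k → k ≤ len i + 1 →
      (2 : ℝ) ^ (k - 1) ≤ g i k)
    (i₀ : ℕ) (hi₀ : i₀ ∈ Finset.Icc 1 g₁) (hshort : len i₀ ≤ n - 2) :
    1 / (2 * q) ^ (n - 2) ≤
      ∑ i ∈ Finset.Icc 1 g₁,
        (1 / q ^ len i) * (1 - ∑ k ∈ Finset.Icc 2 (len i + 1), 1 / g i k) ∧
    1 / (2 * q) ^ (n - 2) = 1 / (q ^ (n - 2) * 2 ^ (n - 2)) := by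
  have hq0 : (0:ℝ) < q := lt_of_lt_of_le one_pos hq
  -- key termwise bound
  have key : ∀ i ∈ Finset.Icc 1 g₁,
      (1/2:ℝ) ^ (len i) / q ^ (len i) ≤
        (1 / q ^ len i) * (1 - ∑ k ∈ Finset.Icc 2 (len i + 1), 1 / g i k) := by
    intro i hi
    have hsum : ∑ k ∈ Finset.Icc 2 (len i + 1), 1 / g i k ≤ 1 - (1/2:ℝ) ^ (len i) := by
      rw [← geo_sum_half (len i)]
      apply Finset.sum_le_sum
      intro k hk
      simp only [Finset.mem_Icc] at hk
      have hg := hgrowth i hi k hk.1 hk.2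
      have h2 : (0:ℝ) < 2 ^ (k - 1) := by positivity
      calc 1 / g i k ≤ 1 / (2:ℝ) ^ (k - 1) :=
              one_div_le_one_div_of_le h2 hg
        _ = (1/2:ℝ) ^ (k - 1) := by rw [div_pow, one_pow]
    have : (1/2:ℝ) ^ (len i) ≤ 1 - ∑ k ∈ Finset.Icc 2 (len i + 1), 1 / g i k := by
      linarith
    calc (1/2:ℝ) ^ (len i) / q ^ (len i)
        = (1 / q ^ len i) * (1/2:ℝ) ^ (len i) := by ring
      _ ≤ (1 / q ^ len i) * (1 - ∑ k ∈ Finset.Icc 2 (len i + 1), 1 / g i k) := by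
          apply mul_le_mul_of_nonneg_left this
          positivity
  constructor
  · have h1 : 1 / (2 * q) ^ (n - 2) ≤ (1/2:ℝ) ^ (len i₀) / q ^ (len i₀) := by
      have heq : (1/2:ℝ) ^ (len i₀) / q ^ (len i₀) = 1 / (2 * q) ^ (len i₀) := by
        rw [mul_pow, div_pow, one_pow]
        field_simp
      rw [heq]
      apply one_div_le_one_div_of_le
      · positivity
      · exact pow_le_pow_right₀ (by linarith) hshort
    have h2 : ((1/2:ℝ) ^ (len i₀) / q ^ (len i₀)) ≤
        ∑ i ∈ Finset.Icc 1 g₁,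
          (1 / q ^ len i) * (1 - ∑ k ∈ Finset.Icc 2 (len i + 1), 1 / g i k) := by
      calc (1/2:ℝ) ^ (len i₀) / q ^ (len i₀)
          ≤ (1 / q ^ len i₀) * (1 - ∑ k ∈ Finset.Icc 2 (len i₀ + 1), 1 / g i₀ k) :=
            key i₀ hi₀
        _ ≤ _ := by
            apply Finset.single_le_sum (f := fun i =>
              (1 / q ^ len i) * (1 - ∑ k ∈ Finset.Icc 2 (len i + 1), 1 / g i k))
              _ hi₀
            intro i hi
            exact le_trans (by positivity) (key i hi)
    linarith
  · rw [mul_pow]; ring_nf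
end

section
/- Let q > 0 be a real number and let ℓ, m ∈ ℕ. For each j ∈ {1,…,m}, fix abstract branch data (g₁(j), n_j, g_j) satisfying the genus-growth condition, with grope length ‖Σ_j‖^q. Let w : {1,…,ℓ} × {1,…,m} → ℕ be weights and let N ∈ ℕ satisfy Σ_{s=1}^{ℓ} w(s,j) ≤ N for every j. For each s ∈ {1,…,ℓ}, j ∈ {1,…,m} and 1 ≤ i ≤ g₁(j), let h(s,j,i) > 0 be a real number. Then Σ_{s=1}^{ℓ} Σ_{j=1}^{m} w(s,j) · Σ_{i=1}^{g₁(j)} q^{−(n_j(i)+1)} · (1 − Σ_{k=2}^{n_j(i)+1} 1/g_j(i,k) − 1/h(s,j,i)) ≤ (N/q) · Σ_{j=1}^{m} ‖Σ_j‖^q. In particular, when q > N the left-hand side is at most δ · Σ_j ‖Σ_j‖^q with δ = N/q < 1. -/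
open Finset

lemma geom_aux (n : ℕ) :
    ∑ k ∈ Finset.Icc 2 (n + 1), ((1 : ℝ) / 2) ^ (k - 1) ≤ 1 - (1 / 2) ^ n := by
  induction n with
  | zero => simp
  | succ n ih =>
    rw [show n + 1 + 1 = (n + 1) + 1 from rfl, Finset.sum_Icc_succ_top (by omega)]
    have hp : ((1 : ℝ) / 2) ^ (n + 1 + 1 - 1) = (1 / 2) ^ n * (1 / 2) := by
      rw [show n + 1 + 1 - 1 = n + 1 from rfl, pow_succ]
    have hs : ((1 : ℝ) / 2) ^ (n + 1) = (1 / 2) ^ n * (1 / 2) := pow_succ _ _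
    rw [hp, hs]
    linarith

/-- Quantitative heart of Proposition 5.9 (winding number zero operators are
contractions): for branch data `(g₁ j, len j, g j)` satisfying the genus-growth
condition, weights `w` with `∑_s w s j ≤ N` for every `j`, and new top-stage genera
`h s j i > 0`, the length of the satellite grope (each branch length increased by one
and a new top stage of genus `h s j i` attached, taken with multiplicity `w s j`) is
at most `(N/q) · ∑_j ‖Σ_j‖^q`.  In particular, for `q > N` this exhibits the
contraction constant `δ = N/q < 1`. -/
theorem satellite_grope_length_contraction (q : ℝ) (hq : 0 < q) (ℓ m : ℕ)
    (g₁ : ℕ → ℕ) (len : ℕ → ℕ → ℕ) (g : ℕ → ℕ → ℕ → ℝ)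
    (hgrowth : ∀ j ∈ Finset.Icc 1 m, ∀ i ∈ Finset.Icc 1 (g₁ j),
      ∀ k, 2 ≤ k → k ≤ len j i + 1 → (2 : ℝ) ^ (k - 1) ≤ g j i k)
    (w : ℕ → ℕ → ℕ) (N : ℕ)
    (hw : ∀ j ∈ Finset.Icc 1 m, ∑ s ∈ Finset.Icc 1 ℓ, w s j ≤ N)
    (h : ℕ → ℕ → ℕ → ℝ)
    (hh : ∀ s ∈ Finset.Icc 1 ℓ, ∀ j ∈ Finset.Icc 1 m, ∀ i ∈ Finset.Icc 1 (g₁ j),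
      0 < h s j i) :
    (∑ s ∈ Finset.Icc 1 ℓ, ∑ j ∈ Finset.Icc 1 m, (w s j : ℝ) *
        ∑ i ∈ Finset.Icc 1 (g₁ j),
          (1 / q ^ (len j i + 1)) *
            (1 - ∑ k ∈ Finset.Icc 2 (len j i + 1), 1 / g j i k - 1 / h s j i) ≤
      ((N : ℝ) / q) * ∑ j ∈ Finset.Icc 1 m, ∑ i ∈ Finset.Icc 1 (g₁ j),
          (1 / q ^ len j i) *
            (1 - ∑ k ∈ Finset.Icc 2 (len j i + 1), 1 / g j i k)) ∧
    ((N : ℝ) < q → (N : ℝ) / q < 1) := by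
  refine ⟨?_, fun hNq => (div_lt_one hq).mpr hNq⟩
  -- nonnegativity of 1 - S
  have hS : ∀ j ∈ Finset.Icc 1 m, ∀ i ∈ Finset.Icc 1 (g₁ j),
      ∑ k ∈ Finset.Icc 2 (len j i + 1), 1 / g j i k ≤ 1 := by
    intro j hj i hi
    have h1 : ∑ k ∈ Finset.Icc 2 (len j i + 1), 1 / g j i k
        ≤ ∑ k ∈ Finset.Icc 2 (len j i + 1), ((1 : ℝ) / 2) ^ (k - 1) := by
      apply Finset.sum_le_sum
      intro k hk
      simp only [Finset.mem_Icc] at hk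
      have hg := hgrowth j hj i hi k hk.1 hk.2
      have h2 : (0 : ℝ) < 2 ^ (k - 1) := by positivity
      calc 1 / g j i k ≤ 1 / (2 : ℝ) ^ (k - 1) := one_div_le_one_div_of_le h2 hg
        _ = ((1 : ℝ) / 2) ^ (k - 1) := by rw [one_div_pow]
    have h2 := geom_aux (len j i)
    have h3 : (0 : ℝ) ≤ (1 / 2) ^ (len j i) := by positivity
    linarith
  -- B j : the inner sums on the right are nonnegative
  have hB : ∀ j ∈ Finset.Icc 1 m, 0 ≤ ∑ i ∈ Finset.Icc 1 (g₁ j),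
      (1 / q ^ len j i) * (1 - ∑ k ∈ Finset.Icc 2 (len j i + 1), 1 / g j i k) := by
    intro j hj
    apply Finset.sum_nonneg
    intro i hi
    have := hS j hj i hi
    have hqp : (0 : ℝ) ≤ 1 / q ^ len j i := by positivity
    have : (0 : ℝ) ≤ 1 - ∑ k ∈ Finset.Icc 2 (len j i + 1), 1 / g j i k := by linarith
    positivity
  calc ∑ s ∈ Finset.Icc 1 ℓ, ∑ j ∈ Finset.Icc 1 m, (w s j : ℝ) *
        ∑ i ∈ Finset.Icc 1 (g₁ j),
          (1 / q ^ (len j i + 1)) *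
            (1 - ∑ k ∈ Finset.Icc 2 (len j i + 1), 1 / g j i k - 1 / h s j i)
      ≤ ∑ s ∈ Finset.Icc 1 ℓ, ∑ j ∈ Finset.Icc 1 m, (w s j : ℝ) *
          ((1 / q) * ∑ i ∈ Finset.Icc 1 (g₁ j),
            (1 / q ^ len j i) *
              (1 - ∑ k ∈ Finset.Icc 2 (len j i + 1), 1 / g j i k)) := by
        apply Finset.sum_le_sum
        intro s hs
        apply Finset.sum_le_sum
        intro j hj
        apply mul_le_mul_of_nonneg_left _ (Nat.cast_nonneg _)
        rw [Finset.mul_sum]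
        apply Finset.sum_le_sum
        intro i hi
        have hhp := hh s hs j hj i hi
        have hrw : (1 / q) * ((1 / q ^ len j i) *
            (1 - ∑ k ∈ Finset.Icc 2 (len j i + 1), 1 / g j i k))
            = (1 / q ^ (len j i + 1)) *
              (1 - ∑ k ∈ Finset.Icc 2 (len j i + 1), 1 / g j i k) := by
          rw [pow_succ]
          field_simp
        rw [hrw]
        apply mul_le_mul_of_nonneg_left _ (by positivity)
        have : 0 < 1 / h s j i := by positivity
        linarith
    _ = ∑ j ∈ Finset.Icc 1 m, (∑ s ∈ Finset.Icc 1 ℓ, (w s j : ℝ)) *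
          ((1 / q) * ∑ i ∈ Finset.Icc 1 (g₁ j),
            (1 / q ^ len j i) *
              (1 - ∑ k ∈ Finset.Icc 2 (len j i + 1), 1 / g j i k)) := by
        rw [Finset.sum_comm]
        simp [Finset.sum_mul]
    _ ≤ ∑ j ∈ Finset.Icc 1 m, (N : ℝ) *
          ((1 / q) * ∑ i ∈ Finset.Icc 1 (g₁ j),
            (1 / q ^ len j i) *
              (1 - ∑ k ∈ Finset.Icc 2 (len j i + 1), 1 / g j i k)) := by
        apply Finset.sum_le_sum
        intro j hj
        apply mul_le_mul_of_nonneg_right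
        · have := hw j hj
          push_cast [← Nat.cast_sum]
          exact_mod_cast this
        · have := hB j hj
          positivity
    _ = ((N : ℝ) / q) * ∑ j ∈ Finset.Icc 1 m, ∑ i ∈ Finset.Icc 1 (g₁ j),
          (1 / q ^ len j i) *
            (1 - ∑ k ∈ Finset.Icc 2 (len j i + 1), 1 / g j i k) := by
        rw [Finset.mul_sum]
        apply Finset.sum_congr rfl
        intro j _
        ring
end
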